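/- arXiv:1012.5237 — 3 statements merged into one kernel-verified Lean document; each statement's English description precedes it below -/
import Mathlib

section
/- As formal power series in z (with y a parameter), cosh(2y · arsinh(z/2)) = Σ_{k≥0} (∏_{j=0}^{k−1}(y² − j²)) · z^{2k}/(2k)!. Equivalently, the coefficient of z^{2k} in the Taylor expansion of z ↦ cosh(2y · arsinh(z/2)) at 0 equals (1/(2k)!) ∏_{j=0}^{k−1}(y² − j²), and all odd coefficients vanish. -/
lemma analytic_aux (y : ℝ) :
    AnalyticAt ℝ (fun z : ℝ => Real.cosh (2 * y * Real.arsinh (z / 2))) 0 := by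
  set F : ℂ → ℂ := fun z => Complex.cosh (2 * y * Complex.log (z / 2 + (1 + (z/2)^2) ^ ((1:ℂ)/2)))
    with hF
  have hbase : AnalyticAt ℂ (fun z : ℂ => 1 + (z/2)^2) 0 :=
    analyticAt_const.add ((analyticAt_id.div analyticAt_const (by norm_num)).pow 2)
  have hsqrt : AnalyticAt ℂ (fun z : ℂ => (1 + (z/2)^2) ^ ((1:ℂ)/2)) 0 := by
    apply hbase.cpow analyticAt_const
    simp [Complex.slitPlane]
  have hinner : AnalyticAt ℂ (fun z : ℂ => z / 2 + (1 + (z/2)^2) ^ ((1:ℂ)/2)) 0 :=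
    (analyticAt_id.div analyticAt_const (by norm_num)).add hsqrt
  have hlog : AnalyticAt ℂ (fun z : ℂ => Complex.log (z / 2 + (1 + (z/2)^2) ^ ((1:ℂ)/2))) 0 := by
    apply hinner.clog
    simp [Complex.slitPlane]
  have hFa : AnalyticAt ℂ F 0 := by
    rw [hF]
    simp only [Complex.cosh]
    exact (((analyticAt_const.mul hlog).cexp).add (((analyticAt_const.mul hlog).neg).cexp)).div
      analyticAt_const (by norm_num)
  have hre : AnalyticAt ℝ (fun x : ℝ => (F (x : ℂ)).re) 0 := by
    have hFa' : AnalyticAt ℝ F ((0:ℝ) : ℂ) := by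
      rw [Complex.ofReal_zero]; exact hFa.restrictScalars
    have h1 : AnalyticAt ℝ (fun x : ℝ => F (x : ℂ)) 0 :=
      hFa'.comp (Complex.ofRealCLM.analyticAt (0:ℝ))
    exact AnalyticAt.comp (f := fun x : ℝ => F (x:ℂ)) (Complex.reCLM.analyticAt _) h1
  have key : ∀ x : ℝ, (F (x : ℂ)).re = Real.cosh (2 * y * Real.arsinh (x / 2)) := by
    intro x
    have h2 : (0:ℝ) ≤ 1 + (x/2)^2 := by positivity
    have hpos : 0 < x/2 + Real.sqrt (1 + (x/2)^2) := by
      nlinarith [Real.sq_sqrt h2, Real.sqrt_nonneg (1 + (x/2)^2), sq_nonneg (x/2 - Real.sqrt (1 + (x/2)^2)), abs_le_abs (le_refl (x/2))]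
    have hsq : ((1:ℂ) + ((x:ℂ)/2)^2) ^ ((1:ℂ)/2) = ((Real.sqrt (1 + (x/2)^2) : ℝ) : ℂ) := by
      rw [show ((1:ℂ) + ((x:ℂ)/2)^2) = (((1 + (x/2)^2 : ℝ)) : ℂ) by push_cast; ring,
        show ((1:ℂ)/2) = ((1/2 : ℝ) : ℂ) by norm_num,
        ← Complex.ofReal_cpow h2, ← Real.sqrt_eq_rpow]
    have hlogeq : Complex.log ((x:ℂ) / 2 + ((1:ℂ) + ((x:ℂ)/2)^2) ^ ((1:ℂ)/2))
        = ((Real.log (x/2 + Real.sqrt (1 + (x/2)^2)) : ℝ) : ℂ) := by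
      rw [hsq, show ((x:ℂ)/2 + ((Real.sqrt (1 + (x/2)^2) : ℝ):ℂ))
          = (((x/2 + Real.sqrt (1 + (x/2)^2) : ℝ)) : ℂ) by push_cast; ring,
        Complex.ofReal_log hpos.le]
    have : F (x:ℂ) = ((Real.cosh (2 * y * Real.arsinh (x/2)) : ℝ) : ℂ) := by
      rw [hF]
      simp only
      rw [hlogeq, Real.arsinh, show (2 * (y:ℂ) * ((Real.log (x/2 + Real.sqrt (1 + (x/2)^2)) : ℝ) : ℂ))
          = (((2 * y * Real.log (x/2 + Real.sqrt (1 + (x/2)^2)) : ℝ)) : ℂ) by push_cast; ring,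
        Complex.ofReal_cosh]
    rw [this, Complex.ofReal_re]
  exact hre.congr (by filter_upwards with x using key x)

noncomputable section
open Real

variable (y : ℝ)

def myf : ℝ → ℝ := fun z => Real.cosh (2 * y * Real.arsinh (z / 2))
def myS : ℝ → ℝ := fun z => Real.sqrt (1 + (z/2)^2)
def myF1 : ℝ → ℝ := fun z => Real.sinh (2 * y * Real.arsinh (z / 2)) * (2*y*((myS z)⁻¹ * (1/2)))
def myF2 : ℝ → ℝ := fun z =>
  Real.cosh (2 * y * Real.arsinh (z / 2)) * (2*y*((myS z)⁻¹ * (1/2))) * (2*y*((myS z)⁻¹ * (1/2)))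
  + Real.sinh (2 * y * Real.arsinh (z / 2)) * (2*y*((-((1/(2*myS z)) * (z/2)) / (myS z)^2) * (1/2)))

lemma myS_pos (z : ℝ) : 0 < myS z := Real.sqrt_pos.2 (by positivity)
lemma myS_sq (z : ℝ) : myS z ^ 2 = 1 + (z/2)^2 := Real.sq_sqrt (by positivity)

lemma hu (z : ℝ) : HasDerivAt (fun z : ℝ => 2 * y * Real.arsinh (z / 2))
    (2*y*((myS z)⁻¹ * (1/2))) z := by
  have h1 : HasDerivAt (fun z : ℝ => z / 2) (1/2) z := by
    simpa using (hasDerivAt_id z).div_const 2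
  exact ((Real.hasDerivAt_arsinh (z/2)).comp z h1).const_mul (2*y)

lemma hS (z : ℝ) : HasDerivAt (myS) ((1/(2*myS z)) * (z/2)) z := by
  have h1 : HasDerivAt (fun z : ℝ => 1 + (z/2)^2) (z/2) z := by
    have : HasDerivAt (fun x : ℝ => 1 + (x / 2) ^ 2) (((2:ℕ):ℝ) * (z / 2) ^ (2 - 1) * (1 / 2)) z :=
      (((hasDerivAt_id z).div_const 2).pow 2).const_add 1
    convert this using 1
    push_cast
    ring
  exact (Real.hasDerivAt_sqrt (by positivity)).comp z h1

lemma hmyf (z : ℝ) : HasDerivAt (myf y) (myF1 y z) z := (hu y z).cosh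

lemma hmyF1 (z : ℝ) : HasDerivAt (myF1 y) (myF2 y z) z := by
  have hinv : HasDerivAt (fun z => (myS z)⁻¹) (-((1/(2*myS z)) * (z/2)) / (myS z)^2) z :=
    (hS z).inv (myS_pos z).ne'
  exact ((hu y z).sinh).mul (((hinv.mul_const (1/2))).const_mul (2*y))

lemma ode_base (z : ℝ) :
    (4 + z^2) * myF2 y z + z * myF1 y z - 4 * y^2 * myf y z = 0 := by
  have h1 := myS_pos z
  have h2 := myS_sq z
  simp only [myf, myF1, myF2]
  set C := Real.cosh (2 * y * Real.arsinh (z / 2))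
  set S' := Real.sinh (2 * y * Real.arsinh (z / 2))
  rw [show (4+z^2 : ℝ) = 4*(myS z)^2 by linear_combination (-4)*h2]
  field_simp
  ring

lemma myf_contDiff : ContDiff ℝ ((⊤ : ℕ∞) : WithTop ℕ∞) (myf y) := by
  have h1 : ContDiff ℝ ((⊤ : ℕ∞) : WithTop ℕ∞) (fun z : ℝ => z / 2) := contDiff_id.div_const 2
  exact ContDiff.cosh (contDiff_const.mul h1.arsinh)

def myD : ℕ → ℝ → ℝ := fun n => iteratedDeriv n (myf y)

lemma hmyD (n : ℕ) (z : ℝ) : HasDerivAt (myD y n) (myD y (n+1) z) z := by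
  have hdiff : Differentiable ℝ (iteratedDeriv n (myf y)) :=
    (myf_contDiff y).differentiable_iteratedDeriv n
      (by exact_mod_cast Ne.lt_top (ENat.coe_ne_top n))
  show HasDerivAt (iteratedDeriv n (myf y)) (iteratedDeriv (n+1) (myf y) z) z
  rw [iteratedDeriv_succ]
  exact (hdiff z).hasDerivAt

lemma myD_one : myD y 1 = myF1 y := by
  funext z
  show iteratedDeriv 1 (myf y) z = _
  rw [iteratedDeriv_succ, iteratedDeriv_zero]
  exact (hmyf y z).deriv

lemma myD_two (z : ℝ) : myD y 2 z = myF2 y z := by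
  show iteratedDeriv 2 (myf y) z = _
  rw [iteratedDeriv_succ]
  have : deriv (iteratedDeriv 1 (myf y)) z = deriv (myF1 y) z := by
    congr 1
    exact myD_one y
  rw [this]
  exact (hmyF1 y z).deriv

lemma ode_all (n : ℕ) (z : ℝ) :
    (4 + z^2) * myD y (n+2) z + (2*(n:ℝ)+1) * z * myD y (n+1) z
      + ((n:ℝ)^2 - 4*y^2) * myD y n z = 0 := by
  induction n generalizing z with
  | zero =>
    have h0 : myD y 0 = myf y := iteratedDeriv_zero
    have h1 := myD_one y
    have h2 := myD_two y z
    have := ode_base y z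
    rw [h0, h1, h2]
    push_cast
    linear_combination this
  | succ n ih =>
    set A : ℝ → ℝ := fun w => (4 + w^2) * myD y (n+2) w + (2*(n:ℝ)+1) * w * myD y (n+1) w
      + ((n:ℝ)^2 - 4*y^2) * myD y n w with hA
    have hA0 : A = fun _ => 0 := funext fun w => ih w
    have h1 : HasDerivAt (fun w : ℝ => 4 + w^2) (2*z) z := by
      simpa using ((hasDerivAt_pow 2 z).const_add 4)
    have h2 : HasDerivAt (fun w : ℝ => (2*(n:ℝ)+1) * w) (2*(n:ℝ)+1) z := by
      simpa using (hasDerivAt_id z).const_mul (2*(n:ℝ)+1)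
    have hA' : HasDerivAt A
        ((2*z) * myD y (n+2) z + (4+z^2) * myD y (n+3) z
          + ((2*(n:ℝ)+1) * myD y (n+1) z + ((2*(n:ℝ)+1) * z) * myD y (n+2) z)
          + ((n:ℝ)^2 - 4*y^2) * myD y (n+1) z) z :=
      ((h1.mul (hmyD y (n+2) z)).add (h2.mul (hmyD y (n+1) z))).add
        ((hmyD y n z).const_mul ((n:ℝ)^2 - 4*y^2))
    have hzero : HasDerivAt A 0 z := by
      rw [hA0]; exact hasDerivAt_const z 0
    have key := hA'.unique hzero
    push_cast
    push_cast at key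
    linear_combination key

lemma recur (n : ℕ) : 4 * myD y (n+2) 0 = (4*y^2 - (n:ℝ)^2) * myD y n 0 := by
  have := ode_all y n 0
  linear_combination this

lemma myD_zero_zero : myD y 0 0 = 1 := by
  show iteratedDeriv 0 (myf y) 0 = 1
  rw [iteratedDeriv_zero]
  simp [myf, Real.arsinh_zero]

lemma myD_one_zero : myD y 1 0 = 0 := by
  rw [myD_one]
  simp [myF1, Real.arsinh_zero]

lemma myD_vals (k : ℕ) :
    myD y (2*k) 0 = ∏ j ∈ Finset.range k, (y^2 - (j:ℝ)^2) ∧ myD y (2*k+1) 0 = 0 := by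
  induction k with
  | zero => simpa using ⟨myD_zero_zero y, myD_one_zero y⟩
  | succ k ih =>
    obtain ⟨ih1, ih2⟩ := ih
    constructor
    · have h := recur y (2*k)
      rw [show 2*k+2 = 2*(k+1) by ring] at h
      rw [Finset.prod_range_succ, ← ih1]
      push_cast at h
      linear_combination h / 4
    · have h := recur y (2*k+1)
      rw [show 2*k+1+2 = 2*(k+1)+1 by ring] at h
      rw [ih2] at h
      push_cast at h
      linarith

lemma hiter_eq (p : FormalMultilinearSeries ℝ ℝ ℝ) {r : ENNReal}
    (hpr : HasFPowerSeriesOnBall (myf y) p 0 r) (n : ℕ) :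
    (n.factorial : ℝ) * p.coeff n = myD y n 0 := by
  have h := hpr.factorial_smul (1:ℝ) n
  rw [nsmul_eq_mul] at h
  have h2 : myD y n 0 = iteratedFDeriv ℝ n (myf y) 0 (fun _ => 1) :=
    iteratedDeriv_eq_iteratedFDeriv
  rw [h2, ← h]
  rfl

lemma coeff_eq (p : FormalMultilinearSeries ℝ ℝ ℝ) {r : ENNReal}
    (hpr : HasFPowerSeriesOnBall (myf y) p 0 r) (n : ℕ) :
    p.coeff n = (if Even n then
        (∏ j ∈ Finset.range (n / 2), (y ^ 2 - (j : ℝ) ^ 2)) / (n.factorial : ℝ)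
      else 0) := by
  have hiter := hiter_eq y p hpr n
  have hfac : (n.factorial : ℝ) ≠ 0 := by positivity
  rcases Nat.even_or_odd n with he | ho
  · rw [if_pos he]
    have hval : myD y n 0 = ∏ j ∈ Finset.range (n/2), (y^2 - (j:ℝ)^2) := by
      have h := (myD_vals y (n/2)).1
      rwa [Nat.two_mul_div_two_of_even he] at h
    rw [hval] at hiter
    field_simp
    linarith
  · rw [if_neg (Nat.not_even_iff_odd.mpr ho)]
    obtain ⟨k, hk⟩ := ho
    have hval : myD y n 0 = 0 := by
      rw [hk]; exact (myD_vals y k).2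
    rw [hval] at hiter
    exact (mul_eq_zero.mp hiter).resolve_left hfac

end

/-- The Taylor expansion of `z ↦ cosh (2 y · arsinh (z/2))` at `0`:
the coefficient of `z^(2k)` is `(∏_{j<k} (y² - j²)) / (2k)!` and all odd
coefficients vanish. -/
theorem cosh_arsinh_powerSeries (y : ℝ) :
    HasFPowerSeriesAt (fun z : ℝ => Real.cosh (2 * y * Real.arsinh (z / 2)))
      (fun n =>
        (if Even n then
            (∏ j ∈ Finset.range (n / 2), (y ^ 2 - (j : ℝ) ^ 2)) / (n.factorial : ℝ)
          else 0) • ContinuousMultilinearMap.mkPiAlgebraFin ℝ n ℝ) 0 := by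
  obtain ⟨p, hp⟩ := analytic_aux y
  obtain ⟨r, hpr⟩ := hp
  have hpr' : HasFPowerSeriesOnBall (myf y) p 0 r := hpr
  have hq : (fun n => (if Even n then
        (∏ j ∈ Finset.range (n / 2), (y ^ 2 - (j : ℝ) ^ 2)) / (n.factorial : ℝ)
      else 0) • ContinuousMultilinearMap.mkPiAlgebraFin ℝ n ℝ) = p := by
    funext n
    rw [← p.mkPiRing_coeff_eq n, coeff_eq y p hpr' n]
    by_cases he : Even n
    · simp only [if_pos he]
      ext m
      simp [ContinuousMultilinearMap.mkPiAlgebraFin_apply, List.prod_ofFn, smul_eq_mul]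
    · simp only [if_neg he]
      ext m
      simp
  rw [hq]
  exact ⟨r, hpr⟩
end

section
/- Let a_j denote 1 if j is even and 2 if j is odd. For every odd integer m and every j ≥ 1, the integer (2j)! divides a_j · ∏_{i=0}^{j−1}(m² − i²). In other words, (a_j/(2j)!) ∏_{i=0}^{j−1}(m² − i²) is an integer. -/
lemma even_choose_of_even_odd (a b : ℕ) (ha : Even a) (hb : Odd b) :
    Even (a.choose b) := by
  obtain ⟨c, rfl⟩ := hb
  rcases Nat.eq_zero_or_pos a with rfl | hpos
  · simp [Nat.choose_eq_zero_of_lt]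
  obtain ⟨a', rfl⟩ : ∃ a', a = a' + 1 := ⟨a - 1, by omega⟩
  have h := Nat.add_one_mul_choose_eq a' (2 * c)
  have h2 : 2 ∣ (a' + 1).choose (2 * c + 1) * (2 * c + 1) := by
    rw [← h]; exact Dvd.dvd.mul_right ha.two_dvd _
  rcases (Nat.Prime.dvd_mul Nat.prime_two).mp h2 with h3 | h3
  · exact even_iff_two_dvd.mpr h3
  · omega

lemma prod_sq_sub_eq (n j : ℕ) (h1 : 1 ≤ j) (h2 : j ≤ n) :
    ∏ i ∈ Finset.range j, ((n : ℤ) ^ 2 - (i : ℤ) ^ 2)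
      = ((n * (n + j - 1).descFactorial (2 * j - 1) : ℕ) : ℤ) := by
  induction j with
  | zero => omega
  | succ k ih =>
    rcases Nat.eq_zero_or_pos k with rfl | hk
    · simp [Nat.descFactorial]
      ring
    · have hkn : k ≤ n := by omega
      rw [Finset.prod_range_succ, ih hk hkn]
      have e1 : (n + (k + 1) - 1) = (n + k - 1) + 1 := by omega
      have e2 : 2 * (k + 1) - 1 = (2 * k - 1) + 1 + 1 := by omega
      rw [e1, e2, Nat.succ_descFactorial_succ, Nat.descFactorial_succ]
      have e3 : n + k - 1 + 1 = n + k := by omega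
      have e4 : n + k - 1 - (2 * k - 1) = n - k := by omega
      rw [e3, e4]
      push_cast [Nat.sub_add_cancel, h2, hkn, Nat.cast_sub hkn]
      ring

/-- For every odd integer `m` and every `j ≥ 1`, the integer `(2j)!` divides
`a_j · ∏_{i<j} (m² - i²)`, where `a_j = 1` for even `j` and `2` for odd `j`. -/
theorem factorial_dvd_odd_square_product (m : ℤ) (hm : Odd m) (j : ℕ) (hj : 1 ≤ j) :
    (((2 * j).factorial : ℤ)) ∣
      (if Even j then 1 else 2) * ∏ i ∈ Finset.range j, (m ^ 2 - (i : ℤ) ^ 2) := by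
  set n := m.natAbs with hn
  have hmn : m ^ 2 = (n : ℤ) ^ 2 := by
    rw [hn, Int.natAbs_sq]
  rw [hmn]
  have hodd : Odd n := Int.natAbs_odd.mpr hm
  rcases lt_or_ge n j with hlt | hle
  · -- product is zero
    have : ∏ i ∈ Finset.range j, ((n : ℤ) ^ 2 - (i : ℤ) ^ 2) = 0 :=
      Finset.prod_eq_zero (Finset.mem_range.mpr hlt) (by ring)
    rw [this, mul_zero]
    exact dvd_zero _
  · rw [prod_sq_sub_eq n j hj hle]
    set D := (n + j - 1).descFactorial (2 * j - 1) with hD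
    set c := (n + j - 1).choose (2 * j - 1) with hc
    have hDc : D = (2 * j - 1).factorial * c :=
      Nat.descFactorial_eq_factorial_mul_choose _ _
    -- (2j)! ∣ (n+j) * D
    have key1 : (2 * j).factorial ∣ (n + j) * D := by
      have : (n + j) * D = (n + j).descFactorial (2 * j) := by
        have e1 : n + j = (n + j - 1) + 1 := by omega
        have e2 : 2 * j = (2 * j - 1) + 1 := by omega
        rw [e1, e2, Nat.succ_descFactorial_succ, hD, e1]
      rw [this]
      exact Nat.factorial_dvd_descFactorial _ _
    -- 2 * j * D = (2j)! * c
    have key2 : 2 * j * D = (2 * j).factorial * c := by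
      obtain ⟨a, ha⟩ : ∃ a, 2 * j = a + 1 := ⟨2 * j - 1, by omega⟩
      have ha' : 2 * j - 1 = a := by omega
      rw [hDc, ha', ha, Nat.factorial_succ]
      ring
    by_cases hje : Even j
    · simp only [if_pos hje]
      -- c is even
      have hce : Even c := by
        apply even_choose_of_even_odd
        · obtain ⟨a, ha⟩ := hodd
          obtain ⟨b, hb⟩ := hje
          exact ⟨a + b, by omega⟩
        · refine ⟨j - 1, by omega⟩
      obtain ⟨t, ht⟩ := hce
      -- j * D = (2j)! * t
      have key3 : j * D = (2 * j).factorial * t := by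
        have : 2 * (j * D) = 2 * ((2 * j).factorial * t) := by
          rw [← mul_assoc, key2, ht]; ring
        omega
      rw [one_mul]
      push_cast
      obtain ⟨q, hq⟩ := key1
      refine ⟨(q : ℤ) - t, ?_⟩
      have : (n : ℤ) * D = ((n + j) * D : ℕ) - ((j * D : ℕ)) := by push_cast; ring
      rw [this, hq, key3]
      push_cast
      ring
    · simp only [if_neg hje]
      obtain ⟨q, hq⟩ := key1
      refine ⟨2 * (q : ℤ) - c, ?_⟩
      have : (2 : ℤ) * ((n * D : ℕ)) = 2 * ((n + j) * D : ℕ) - ((2 * j * D : ℕ)) := by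
        push_cast; ring
      rw [this, hq, key2]
      push_cast
      ring
end

section
/- Let c be a nonnegative integer and let a_j = 1 if j is even, 2 if j is odd. If for every integer j ≥ 2 the number (a_j/(2j)!) ∏_{i=0}^{j−1}(c − i²) is an integer, then c = 0 or c is the square of an odd integer. -/
open Finset

private lemma fg_prod_range_add (n k : ℕ) : ∏ i ∈ range k, (n + i) = n.ascFactorial k := by
  induction k with
  | zero => simp
  | succ k ih => rw [prod_range_succ, ih, Nat.ascFactorial_succ, mul_comm]

private lemma fg_square_prod (m : ℕ) (hm : 1 ≤ m) :
    2 * ∏ i ∈ range m, ((m : ℤ) ^ 2 - (i : ℤ) ^ 2) = ((2 * m).factorial : ℤ) := by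
  have h1 : ∏ i ∈ range m, ((m : ℤ) ^ 2 - (i : ℤ) ^ 2)
      = (∏ i ∈ range m, ((m : ℤ) - i)) * ∏ i ∈ range m, ((m : ℤ) + i) := by
    rw [← prod_mul_distrib]
    exact prod_congr rfl fun i _ => by ring
  have h2 : ∏ i ∈ range m, ((m : ℤ) - i) = (m.factorial : ℤ) := by
    rw [← Nat.descFactorial_self m, Nat.descFactorial_eq_prod_range, Nat.cast_prod]
    refine prod_congr rfl fun i hi => ?_
    have hle : i ≤ m := le_of_lt (mem_range.mp hi)
    push_cast [hle]
    ring
  have h3 : ∏ i ∈ range m, ((m : ℤ) + i) = (m.ascFactorial m : ℤ) := by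
    rw [← fg_prod_range_add, Nat.cast_prod]
    push_cast
    rfl
  rw [h1, h2, h3]
  obtain ⟨n, rfl⟩ : ∃ n, m = n + 1 := ⟨m - 1, by omega⟩
  norm_cast
  calc 2 * ((n + 1).factorial * (n + 1).ascFactorial (n + 1))
      = (2 * (n + 1)) * (n.factorial * (n + 1).ascFactorial (n + 1)) := by
        rw [Nat.factorial_succ]; ring
    _ = (2 * (n + 1)) * (n + (n + 1)).factorial := by rw [Nat.factorial_mul_ascFactorial]
    _ = (2 * (n + 1)).factorial := by
        rw [show 2 * (n + 1) = (n + (n + 1)) + 1 by ring, Nat.factorial_succ]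

private lemma fg_coprime_of_modeq {x a n : ℕ} (h : x ≡ a [MOD n]) (ha : Nat.Coprime a n) :
    Nat.Coprime x n := by
  have h1 : Nat.gcd n x = Nat.gcd n a := by
    rw [Nat.gcd_rec n x, Nat.gcd_rec n a, h]
  have h2 := ha
  unfold Nat.Coprime at *
  rw [Nat.gcd_comm] at h2 ⊢
  rw [h1]; exact h2

private lemma fg_exists_prime_modeq {M x : ℕ} (hM : M ≠ 0) (hx : Nat.Coprime x M) :
    ∃ p : ℕ, p.Prime ∧ 2 < p ∧ p ≡ x [MOD M] := by
  haveI : NeZero M := ⟨hM⟩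
  have h : IsUnit (x : ZMod M) := (ZMod.isUnit_iff_coprime x M).mpr hx
  obtain ⟨p, hp2, hpp, hpe⟩ := Nat.forall_exists_prime_gt_and_eq_mod h 2
  exact ⟨p, hpp, hp2, (ZMod.natCast_eq_natCast_iff _ _ _).mp hpe⟩

private lemma fg_jacobi_one {w p : ℕ} (hw : Odd w) (hp4 : p % 4 = 1) (hpe : p ≡ 1 [MOD w]) :
    jacobiSym (w : ℤ) p = 1 := by
  rw [jacobiSym.quadratic_reciprocity_one_mod_four' hw hp4]
  have h : ((p : ℤ)) % (w : ℤ) = (1 : ℤ) % (w : ℤ) := by exact_mod_cast hpe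
  calc jacobiSym (p : ℤ) w = jacobiSym (1 : ℤ) w := jacobiSym.mod_left' h
    _ = 1 := jacobiSym.one_left w

private lemma fg_odd_factorization {u : ℕ} (hu : u ≠ 0) (hns : ¬ IsSquare u) :
    ∃ q : ℕ, q.Prime ∧ Odd (u.factorization q) := by
  obtain ⟨a, b, hab, hsf⟩ := Nat.sq_mul_squarefree u
  have ha0 : a ≠ 0 := by rintro rfl; simp at hab; omega
  have hb0 : b ≠ 0 := by rintro rfl; simp at hab; exact hu hab.symm
  have ha1 : a ≠ 1 := by
    rintro rfl
    exact hns ⟨b, by rw [← hab]; ring⟩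
  obtain ⟨q, hq, hqa⟩ := Nat.exists_prime_and_dvd ha1
  refine ⟨q, hq, ?_⟩
  have hfac : u.factorization q = 2 * b.factorization q + a.factorization q := by
    rw [← hab, Nat.factorization_mul (pow_ne_zero 2 hb0) ha0, Nat.factorization_pow]
    simp [mul_comm]
  have haq : a.factorization q = 1 := by
    have hle := (Nat.squarefree_iff_factorization_le_one ha0).mp hsf q
    have hge : 0 < a.factorization q := hq.factorization_pos_of_dvd ha0 hqa
    omega
  rw [hfac, haq]
  exact ⟨b.factorization q, by ring⟩

private lemma fg_exists_prime_nonsquare {c : ℕ} (hc : 0 < c) (hns : ¬ IsSquare c) :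
    ∃ p : ℕ, p.Prime ∧ 2 < p ∧ jacobiSym (c : ℤ) p = -1 := by
  set e := c.factorization 2 with he
  set u := ordCompl[2] c with hu
  have hcu : 2 ^ e * u = c := Nat.ordProj_mul_ordCompl_eq_self c 2
  have hu0 : u ≠ 0 := (Nat.ordCompl_pos 2 hc.ne').ne'
  have hnd : ¬ (2 ∣ u) := Nat.not_dvd_ordCompl Nat.prime_two hc.ne'
  have huodd : Odd u := Nat.odd_iff.mpr (Nat.two_dvd_ne_zero.mp hnd)
  have co2u : Nat.Coprime 2 u := (Nat.prime_two.coprime_iff_not_dvd).mpr hnd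
  have co8u : Nat.Coprime 8 u := by
    have := Nat.Coprime.pow_left 3 co2u
    norm_num at this
    exact this
  rcases Nat.even_or_odd e with hee | hoe
  · -- even 2-adic valuation: odd part u is a nonsquare
    have hus : ¬ IsSquare u := by
      rintro ⟨w, hw⟩
      obtain ⟨f, hf⟩ := hee
      exact hns ⟨2 ^ f * w, by rw [← hcu, hf, hw]; ring⟩
    obtain ⟨q, hqp, hqo⟩ := fg_odd_factorization hu0 hus
    set k := u.factorization q with hk
    have hk0 : k ≠ 0 := by rcases hqo with ⟨t, ht⟩; omega
    have hq2 : q ≠ 2 := by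
      rintro rfl
      exact hk0 (Nat.factorization_eq_zero_of_not_dvd hnd)
    have hqodd : Odd q := hqp.odd_of_ne_two hq2
    set v := ordCompl[q] u with hv
    have huv : q ^ k * v = u := Nat.ordProj_mul_ordCompl_eq_self u q
    have hv0 : v ≠ 0 := (Nat.ordCompl_pos q hu0).ne'
    have hqv : ¬ q ∣ v := Nat.not_dvd_ordCompl hqp hu0
    have hvdvd : v ∣ u := Nat.ordCompl_dvd u q
    have hvodd : Odd v := Nat.odd_iff.mpr (Nat.two_dvd_ne_zero.mp fun h2v => hnd (h2v.trans hvdvd))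
    haveI : Fact q.Prime := ⟨hqp⟩
    have hchar : ringChar (ZMod q) ≠ 2 := by
      rw [ZMod.ringChar_zmod_n]; exact hq2
    obtain ⟨b, hb⟩ := FiniteField.exists_nonsquare hchar
    set s := b.val with hs
    have hsb : ((s : ℤ) : ZMod q) = b := by
      push_cast
      exact ZMod.natCast_rightInverse b
    have hJsq : jacobiSym (s : ℤ) q = -1 :=
      (ZMod.nonsquare_iff_jacobiSym_eq_neg_one).mpr (by rw [hsb]; exact hb)
    have hb0 : b ≠ 0 := fun h => hb (h ▸ ⟨0, by simp⟩)
    have hqs : ¬ q ∣ s := by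
      intro hdvd
      apply hb0
      rw [← hsb]
      exact_mod_cast (ZMod.natCast_eq_zero_iff s q).mpr hdvd
    -- coprimality of the moduli
    have h2q : ¬ (2 ∣ q) := Nat.two_dvd_ne_zero.mpr (Nat.odd_iff.mp hqodd)
    have co8q : Nat.Coprime 8 q := by
      have := Nat.Coprime.pow_left 3 ((Nat.prime_two.coprime_iff_not_dvd).mpr h2q)
      norm_num at this
      exact this
    have co8v : Nat.Coprime 8 v := by
      have h2v : ¬ (2 ∣ v) := fun h2v => hnd (h2v.trans hvdvd)
      have := Nat.Coprime.pow_left 3 ((Nat.prime_two.coprime_iff_not_dvd).mpr h2v)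
      norm_num at this
      exact this
    have coqv : Nat.Coprime q v := (hqp.coprime_iff_not_dvd).mpr hqv
    obtain ⟨y, hy8, hyq⟩ := Nat.chineseRemainder co8q 1 s
    have co8qv : Nat.Coprime (8 * q) v := Nat.coprime_mul_iff_left.mpr ⟨co8v, coqv⟩
    obtain ⟨x, hxy, hxv⟩ := Nat.chineseRemainder co8qv (y : ℕ) 1
    have hx8 : (x : ℕ) ≡ 1 [MOD 8] := ((Nat.ModEq.of_dvd ⟨q, rfl⟩ hxy).trans hy8)
    have hxq : (x : ℕ) ≡ s [MOD q] := ((Nat.ModEq.of_dvd (dvd_mul_left q 8) hxy).trans hyq)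
    have hxco : Nat.Coprime (x : ℕ) (8 * q * v) := by
      have c1 : Nat.Coprime (x : ℕ) 8 := fg_coprime_of_modeq hx8 (by norm_num)
      have c2 : Nat.Coprime (x : ℕ) q :=
        fg_coprime_of_modeq hxq ((hqp.coprime_iff_not_dvd).mpr hqs).symm
      have c3 : Nat.Coprime (x : ℕ) v := fg_coprime_of_modeq hxv (Nat.coprime_one_left v)
      exact (c1.mul_right c2).mul_right c3
    obtain ⟨p, hpp, hp2, hpx⟩ := fg_exists_prime_modeq (Nat.mul_ne_zero (Nat.mul_ne_zero (by norm_num) hqp.ne_zero) hv0) hxco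
    have hp8 : p % 8 = 1 := by
      have h1 : p ≡ 1 [MOD 8] :=
        (Nat.ModEq.of_dvd ⟨q * v, by ring⟩ hpx).trans hx8
      have h2 : p % 8 = 1 % 8 := h1
      omega
    have hpq : p ≡ s [MOD q] :=
      (Nat.ModEq.of_dvd ⟨8 * v, by ring⟩ hpx).trans hxq
    have hpv : p ≡ 1 [MOD v] :=
      (Nat.ModEq.of_dvd (dvd_mul_left v (8 * q)) hpx).trans hxv
    have hpodd : p % 2 = 1 := by omega
    have hp4 : p % 4 = 1 := by omega
    refine ⟨p, hpp, hp2, ?_⟩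
    have hcz : (c : ℤ) = 2 ^ e * ((q : ℤ) ^ k * (v : ℤ)) := by
      rw [← hcu, ← huv]; push_cast; ring
    rw [hcz, jacobiSym.mul_left, jacobiSym.mul_left, jacobiSym.pow_left, jacobiSym.pow_left]
    have h2p : jacobiSym 2 p = 1 := by
      rw [jacobiSym.at_two (Nat.odd_iff.mpr hpodd), ZMod.χ₈_nat_eq_if_mod_eight]
      simp [hp8, hpodd]
    have hqpj : jacobiSym (q : ℤ) p = -1 := by
      rw [jacobiSym.quadratic_reciprocity_one_mod_four' hqodd hp4]
      have h : ((p : ℤ)) % (q : ℤ) = ((s : ℤ)) % (q : ℤ) := by exact_mod_cast hpq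
      rw [jacobiSym.mod_left' h]
      exact hJsq
    have hvpj : jacobiSym (v : ℤ) p = 1 := fg_jacobi_one hvodd hp4 hpv
    rw [h2p, hqpj, hvpj, one_pow, one_mul, mul_one, Odd.neg_one_pow hqo]
  · -- odd 2-adic valuation
    obtain ⟨x, hx8, hxu⟩ := Nat.chineseRemainder co8u 5 1
    have hxco : Nat.Coprime (x : ℕ) (8 * u) := by
      have c1 : Nat.Coprime (x : ℕ) 8 := fg_coprime_of_modeq hx8 (by norm_num)
      have c2 : Nat.Coprime (x : ℕ) u := fg_coprime_of_modeq hxu (Nat.coprime_one_left u)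
      exact c1.mul_right c2
    obtain ⟨p, hpp, hp2, hpx⟩ := fg_exists_prime_modeq (Nat.mul_ne_zero (by norm_num) hu0) hxco
    have hp8 : p % 8 = 5 := by
      have h1 : p ≡ 5 [MOD 8] := (Nat.ModEq.of_dvd ⟨u, rfl⟩ hpx).trans hx8
      have h2 : p % 8 = 5 % 8 := h1
      omega
    have hpu : p ≡ 1 [MOD u] := (Nat.ModEq.of_dvd (dvd_mul_left u 8) hpx).trans hxu
    have hpodd : p % 2 = 1 := by omega
    have hp4 : p % 4 = 1 := by omega
    refine ⟨p, hpp, hp2, ?_⟩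
    have hcz : (c : ℤ) = 2 ^ e * (u : ℤ) := by rw [← hcu]; push_cast; ring
    rw [hcz, jacobiSym.mul_left, jacobiSym.pow_left]
    have h2p : jacobiSym 2 p = -1 := by
      rw [jacobiSym.at_two (Nat.odd_iff.mpr hpodd), ZMod.χ₈_nat_eq_if_mod_eight]
      simp [hp8, hpodd]
    have hup : jacobiSym (u : ℤ) p = 1 := fg_jacobi_one huodd hp4 hpu
    rw [h2p, hup, mul_one, Odd.neg_one_pow hoe]

/-- If a nonnegative integer `c` satisfies the Feder–Gitler conditions for all `j ≥ 2`,
i.e. `(2j)!` divides `a_j ∏_{i<j} (c - i²)` with `a_j = 1` for `j` even and `2` for `j` odd,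
then `c = 0` or `c` is the square of an odd integer. -/
theorem feder_gitler_stable_converse (c : ℕ)
    (h : ∀ j : ℕ, 2 ≤ j →
      (((2 * j).factorial : ℤ)) ∣
        (if Even j then 1 else 2) * ∏ i ∈ Finset.range j, ((c : ℤ) - (i : ℤ) ^ 2)) :
    c = 0 ∨ ∃ m : ℤ, Odd m ∧ (c : ℤ) = m ^ 2 := by
  rcases Nat.eq_zero_or_pos c with hc0 | hc0
  · exact Or.inl hc0
  right
  by_cases hsq : IsSquare c
  · obtain ⟨m, hm⟩ := hsq
    rcases Nat.even_or_odd m with hme | hmo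
    · exfalso
      have hm0 : m ≠ 0 := by rintro rfl; simp [hm] at hc0
      have hm2 : 2 ≤ m := by rcases hme with ⟨t, ht⟩; omega
      have h' := h m hm2
      rw [if_pos hme] at h'
      have hprod : ∏ i ∈ Finset.range m, ((c : ℤ) - (i : ℤ) ^ 2)
          = ∏ i ∈ Finset.range m, ((m : ℤ) ^ 2 - (i : ℤ) ^ 2) :=
        Finset.prod_congr rfl fun i _ => by rw [hm]; push_cast; ring
      rw [one_mul, hprod] at h'
      have hsp := fg_square_prod m (by omega)
      set P := ∏ i ∈ Finset.range m, ((m : ℤ) ^ 2 - (i : ℤ) ^ 2) with hP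
      have hfpos : (0 : ℤ) < ((2 * m).factorial : ℤ) := by exact_mod_cast (2 * m).factorial_pos
      have hPpos : 0 < P := by omega
      have hle := Int.le_of_dvd hPpos h'
      omega
    · refine ⟨(m : ℤ), ?_, ?_⟩
      · exact_mod_cast hmo
      · rw [hm]; push_cast; ring
  · exfalso
    obtain ⟨p, hpp, hp2, hJ⟩ := fg_exists_prime_nonsquare hc0 hsq
    haveI : Fact p.Prime := ⟨hpp⟩
    have hns : ¬ IsSquare (((c : ℤ) : ZMod p)) := ZMod.nonsquare_iff_jacobiSym_eq_neg_one.mp hJ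
    have hj := h p (by omega)
    have hpf : (p : ℤ) ∣ ((2 * p).factorial : ℤ) :=
      Int.natCast_dvd_natCast.mpr (Nat.dvd_factorial hpp.pos (by omega))
    have hpd := dvd_trans hpf hj
    have hpodd : ¬ Even p := fun hev => by
      have := (Nat.Prime.even_iff hpp).mp hev; omega
    rw [if_neg hpodd] at hpd
    have hpI : Prime ((p : ℤ)) := Nat.prime_iff_prime_int.mp hpp
    rcases hpI.dvd_mul.mp hpd with h2 | hP
    · have hd2 : p ∣ 2 := by exact_mod_cast h2
      have := Nat.le_of_dvd (by norm_num) hd2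
      omega
    · obtain ⟨i, hi, hdvd⟩ := hpI.exists_mem_finset_dvd hP
      apply hns
      have h0 : (((c : ℤ) - (i : ℤ) ^ 2 : ℤ) : ZMod p) = 0 :=
        (ZMod.intCast_zmod_eq_zero_iff_dvd _ p).mpr hdvd
      push_cast at h0
      refine ⟨(i : ZMod p), ?_⟩
      push_cast
      linear_combination h0
end
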